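/- arXiv:2402.18059 — 2 statements merged into one kernel-verified Lean document; each statement's English description precedes it below -/
import Mathlib

section
/- Let g = λ* g_D + (1-λ*) g_S where λ* minimizes ‖λ g_D + (1-λ) g_S‖ over λ ∈ [0,1], and suppose g ≠ 0. Then ⟨g, g_D⟩ ≥ ‖g‖² and ⟨g, g_S⟩ ≥ ‖g‖²; in particular, -g is a descent direction for both objectives whose gradients are g_D and g_S. -/
open RealInnerProductSpace

theorem mgda_common_descent {n : ℕ} (gD gS : EuclideanSpace ℝ (Fin n))
    (l : ℝ) (hl : l ∈ Set.Icc (0:ℝ) 1)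
    (hmin : ∀ l' ∈ Set.Icc (0:ℝ) 1,
      ‖l • gD + (1 - l) • gS‖ ≤ ‖l' • gD + (1 - l') • gS‖)
    (g : EuclideanSpace ℝ (Fin n)) (hg : g = l • gD + (1 - l) • gS)
    (hne : g ≠ 0) :
    ⟪g, gD⟫ ≥ ‖g‖^2 ∧ ⟪g, gS⟫ ≥ ‖g‖^2 ∧ ⟪gD, -g⟫ < 0 ∧ ⟪gS, -g⟫ < 0 := by
  obtain ⟨hl0, hl1⟩ := hl
  set v : EuclideanSpace ℝ (Fin n) := gD - gS with hv
  have hrepr : ∀ t : ℝ, t • gD + (1 - t) • gS = g + (t - l) • v := by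
    intro t
    rw [hg, hv]
    module
  -- key inequality
  have key : ∀ t ∈ Set.Icc (0:ℝ) 1,
      0 ≤ 2*(t-l)*⟪g,v⟫ + (t-l)^2 * ‖v‖^2 := by
    intro t ht
    have h1 := hmin t ht
    rw [hrepr t, hrepr l] at h1
    simp only [sub_self, zero_smul, add_zero] at h1
    have h2 : ‖g‖^2 ≤ ‖g + (t-l) • v‖^2 := by
      have := sq_le_sq' (by linarith [norm_nonneg g]) h1
      linarith [this]
    rw [norm_add_sq_real, real_inner_smul_right, norm_smul] at h2
    have : ‖(t-l) • v‖ ^ 2 = (t-l)^2 * ‖v‖^2 := by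
      rw [norm_smul]; rw [mul_pow]; simp [sq_abs]
    rw [norm_smul] at this
    nlinarith [h2, this]
  have hgg : (0:ℝ) < ‖g‖^2 := by
    have : 0 < ‖g‖ := norm_pos_iff.mpr hne
    positivity
  set c : ℝ := ⟪g,v⟫ with hc
  -- (1-l)*c ≥ 0
  have h1 : 0 ≤ (1-l)*c := by
    by_contra h
    push_neg at h
    have hl1' : l < 1 := by
      rcases lt_or_eq_of_le hl1 with h' | h'
      · exact h'
      · exfalso; rw [h'] at h; simp at h
    have hcneg : c < 0 := by nlinarith
    have hvne : ‖v‖^2 > 0 := by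
      rcases eq_or_ne v 0 with h' | h'
      · exfalso; rw [hc, h'] at hcneg; simp at hcneg
      · have : 0 < ‖v‖ := norm_pos_iff.mpr h'
        positivity
    set ε : ℝ := min (1-l) (-c/‖v‖^2) with hε
    have hε0 : 0 < ε := lt_min (by linarith) (div_pos (by linarith) hvne)
    have hεle : ε * ‖v‖^2 ≤ -c := by
      have : ε ≤ -c/‖v‖^2 := min_le_right _ _
      calc ε * ‖v‖^2 ≤ (-c/‖v‖^2) * ‖v‖^2 := by nlinarith
        _ = -c := div_mul_cancel₀ _ hvne.ne'
    have ht : l + ε ∈ Set.Icc (0:ℝ) 1 := by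
      constructor
      · linarith
      · have : ε ≤ 1 - l := min_le_left _ _
        linarith
    have := key (l + ε) ht
    have he : l + ε - l = ε := by ring
    rw [he] at this
    nlinarith
  -- l*c ≤ 0
  have h2 : l*c ≤ 0 := by
    by_contra h
    push_neg at h
    have hl0' : 0 < l := by nlinarith
    have hcpos : 0 < c := by nlinarith
    have hvne : ‖v‖^2 > 0 := by
      rcases eq_or_ne v 0 with h' | h'
      · exfalso; rw [hc, h'] at hcpos; simp at hcpos
      · have : 0 < ‖v‖ := norm_pos_iff.mpr h'
        positivity
    set ε : ℝ := min l (c/‖v‖^2) with hε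
    have hε0 : 0 < ε := lt_min hl0' (div_pos hcpos hvne)
    have hεle : ε * ‖v‖^2 ≤ c := by
      have : ε ≤ c/‖v‖^2 := min_le_right _ _
      calc ε * ‖v‖^2 ≤ (c/‖v‖^2) * ‖v‖^2 := by nlinarith
        _ = c := div_mul_cancel₀ _ hvne.ne'
    have ht : l - ε ∈ Set.Icc (0:ℝ) 1 := by
      constructor
      · have : ε ≤ l := min_le_left _ _
        linarith
      · linarith
    have := key (l - ε) ht
    have he : l - ε - l = -ε := by ring
    rw [he] at this
    nlinarith
  -- inner product identities
  have hginner : ⟪g,g⟫ = ‖g‖^2 := real_inner_self_eq_norm_sq g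
  have hD : ⟪g, gD⟫ = ⟪g,g⟫ + (1-l)*c := by
    rw [hc, hv, hg]
    simp only [inner_sub_right, inner_add_right, inner_smul_right]
    ring
  have hS : ⟪g, gS⟫ = ⟪g,g⟫ - l*c := by
    rw [hc, hv, hg]
    simp only [inner_sub_right, inner_add_right, inner_smul_right]
    ring
  have hDge : ⟪g, gD⟫ ≥ ‖g‖^2 := by rw [hD, hginner]; linarith
  have hSge : ⟪g, gS⟫ ≥ ‖g‖^2 := by rw [hS, hginner]; linarith
  refine ⟨hDge, hSge, ?_, ?_⟩
  · rw [inner_neg_right, real_inner_comm]; linarith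
  · rw [inner_neg_right, real_inner_comm]; linarith
end

section
/- Given logits l_v for v in a finite vocabulary V, green-membership probabilities ŷ_v ∈ [0,1], and δ ≥ 0, define modified logits l̂_v = l_v + ŷ_v δ. Then the softmax probability mass of the exactly-green tokens, ∑_{v: ŷ_v = 1} exp(l̂_v)/∑_{w∈V} exp(l̂_w), is monotonically non-decreasing in δ. -/
open scoped Classical

theorem green_mass_monotone_in_delta {V : Type*} [Fintype V] [Nonempty V]
    (l : V → ℝ) (yhat : V → ℝ) (hy : ∀ v, yhat v ∈ Set.Icc (0:ℝ) 1)
    (δ₁ δ₂ : ℝ) (h₁ : 0 ≤ δ₁) (h₂ : δ₁ ≤ δ₂) :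
    (∑ v ∈ Finset.univ.filter (fun v => yhat v = 1), Real.exp (l v + yhat v * δ₁)) /
      (∑ w, Real.exp (l w + yhat w * δ₁)) ≤
    (∑ v ∈ Finset.univ.filter (fun v => yhat v = 1), Real.exp (l v + yhat v * δ₂)) /
      (∑ w, Real.exp (l w + yhat w * δ₂)) := by
  set G1 := ∑ v ∈ Finset.univ.filter (fun v => yhat v = 1), Real.exp (l v + yhat v * δ₁) with hG1
  set G2 := ∑ v ∈ Finset.univ.filter (fun v => yhat v = 1), Real.exp (l v + yhat v * δ₂) with hG2
  set D1 := ∑ w, Real.exp (l w + yhat w * δ₁) with hD1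
  set D2 := ∑ w, Real.exp (l w + yhat w * δ₂) with hD2
  have hΔ : 0 ≤ δ₂ - δ₁ := by linarith
  set c := Real.exp (δ₂ - δ₁) with hc
  have hc1 : 1 ≤ c := Real.one_le_exp hΔ
  have hD1pos : 0 < D1 := Finset.sum_pos (fun w _ => Real.exp_pos _) Finset.univ_nonempty
  have hD2pos : 0 < D2 := Finset.sum_pos (fun w _ => Real.exp_pos _) Finset.univ_nonempty
  have hG1nn : 0 ≤ G1 := Finset.sum_nonneg fun v _ => (Real.exp_pos _).le
  -- G2 = c * G1
  have hG : G2 = c * G1 := by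
    rw [hG1, hG2, Finset.mul_sum]
    apply Finset.sum_congr rfl
    intro v hv
    have h1 : yhat v = 1 := (Finset.mem_filter.mp hv).2
    rw [h1, hc, ← Real.exp_add]
    ring_nf
  -- D2 ≤ c * D1
  have hD : D2 ≤ c * D1 := by
    rw [hD1, hD2, Finset.mul_sum]
    apply Finset.sum_le_sum
    intro w _
    rw [hc, ← Real.exp_add]
    apply Real.exp_le_exp.mpr
    have := (hy w).2
    nlinarith
  rw [div_le_div_iff₀ hD1pos hD2pos]
  calc G1 * D2 ≤ G1 * (c * D1) := by
        exact mul_le_mul_of_nonneg_left hD hG1nn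
    _ = G2 * D1 := by rw [hG]; ring
end
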